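/- Let A be an abelian category, ξ : 0 → K → X →^{α} Y → 0 a short exact sequence, and K' an object with K ∈ add K'. Then α is right minimal if and only if the connecting map c(ξ, K') : Hom(K, K') → Ext¹(Y, K') is a right minimal morphism of left Γ(K')-modules. -/

import Mathlib

set_option linter.unusedSectionVars false

open CategoryTheory Abelian Limits

universe w v u

attribute [local instance] CategoryTheory.Abelian.hasFiniteBiproducts

variable {A : Type u} [Category.{v} A] [Abelian A]

/-- `M` belongs to `add K`: it is a direct summand of a finite direct sum of copies of `K`. -/
def InAdd (K M : A) : Prop :=
  ∃ (n : ℕ) (s : M ⟶ ⨁ (fun _ : Fin n => K)) (r : (⨁ fun _ : Fin n => K) ⟶ M),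
    s ≫ r = 𝟙 M

/-- `α` factors through `α'`. -/
def Factors {X X' Y : A} (α : X ⟶ Y) (α' : X' ⟶ Y) : Prop :=
  ∃ v : X ⟶ X', v ≫ α' = α

/-- `α` and `α'` are right equivalent. -/
def RightEquiv {X X' Y : A} (α : X ⟶ Y) (α' : X' ⟶ Y) : Prop :=
  Factors α α' ∧ Factors α' α

/-- A morphism is right minimal. -/
def RightMinimal {X Y : A} (α : X ⟶ Y) : Prop :=
  ∀ v : X ⟶ X, v ≫ α = α → IsIso v

/-- A short exact sequence `0 → K → X → Y → 0`. -/
structure SES (K Y : A) where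
  X : A
  i : K ⟶ X
  p : X ⟶ Y
  zero : i ≫ p = 0
  shortExact : (ShortComplex.mk i p zero).ShortExact

variable [HasExt.{w} A]

lemma Ext.mk₀_add' {X Y : A} (f g : X ⟶ Y) :
    Ext.mk₀ (f + g) = Ext.mk₀ f + Ext.mk₀ g := by
  letI := HasDerivedCategory.standard A
  apply Ext.ext
  simp [Ext.add_hom, ShiftedHom.mk₀, Functor.map_add]

/-- The class `[ξ] ∈ Ext¹(Y, K)` of a short exact sequence `ξ`. -/
noncomputable def SES.cls {K Y : A} (E : SES K Y) : Ext Y K 1 :=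
  E.shortExact.extClass

/-- The class `[u.ξ]` of the pushout of `ξ` along `u`. -/
noncomputable def SES.push {K Y Z : A} (E : SES K Y) (u : K ⟶ Z) : Ext Y Z 1 :=
  E.cls.comp (Ext.mk₀ u) (add_zero 1)

noncomputable instance extSMulEnd (Y K : A) : SMul (End K) (Ext Y K 1) :=
  ⟨fun g e => e.comp (Ext.mk₀ g) (add_zero 1)⟩

lemma extSmul_def {Y K : A} (g : End K) (e : Ext Y K 1) :
    g • e = e.comp (Ext.mk₀ g) (add_zero 1) := rfl

/-- `Ext¹(Y, K)` as a left module over `Γ(K) = End K`, via pushout. -/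
noncomputable instance extModuleEnd (Y K : A) : Module (End K) (Ext Y K 1) where
  one_smul e := by rw [extSmul_def]; exact Ext.comp_mk₀_id e
  mul_smul g h e := by
    rw [extSmul_def, extSmul_def, extSmul_def,
      Ext.comp_assoc_of_third_deg_zero, Ext.mk₀_comp_mk₀]
    rfl
  smul_add g e f := by
    rw [extSmul_def, extSmul_def, extSmul_def]; exact Ext.add_comp e f _ _
  add_smul g h e := by
    rw [extSmul_def, extSmul_def, extSmul_def, Ext.mk₀_add', Ext.comp_add]
  zero_smul e := by rw [extSmul_def]; rw [Ext.mk₀_zero, Ext.comp_zero]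
  smul_zero g := by rw [extSmul_def]; exact Ext.zero_comp _ _ _ _ _

/-- The connecting map `c(ξ, K) : Hom(K₁, K) → Ext¹(Y, K)`, `u ↦ [u.ξ]`,
as a morphism of left `Γ(K) = End K`-modules. -/
noncomputable def SES.conn {K₁ Y : A} (E : SES K₁ Y) (K : A) :
    (K₁ ⟶ K) →ₗ[End K] Ext Y K 1 where
  toFun u := E.push u
  map_add' u v := by
    dsimp [SES.push]
    rw [Ext.mk₀_add', Ext.comp_add]
  map_smul' g u := by
    dsimp [SES.push]
    rw [End.smul_right, extSmul_def, Ext.comp_assoc_of_third_deg_zero,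
      Ext.mk₀_comp_mk₀]

/-- Right minimality for a morphism of modules. -/
def ModRightMinimal {R : Type*} [Ring R] {M N : Type*} [AddCommGroup M] [AddCommGroup N]
    [Module R M] [Module R N] (c : M →ₗ[R] N) : Prop :=
  ∀ g : M →ₗ[R] M, c.comp g = c → Function.Bijective g

universe w'

/-- The `R`-module `M` admits a projective cover. -/
def HasProjCover (R : Type*) [Ring R] (M : Type w') [AddCommGroup M] [Module R M] : Prop :=
  ∃ (P : Type w') (_ : AddCommGroup P) (_ : Module R P) (f : P →ₗ[R] M),
    Module.Projective R P ∧ Function.Surjective f ∧ ModRightMinimal f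

/-- `ξ` is a universal `L`-extension of `Y` by `K`. -/
def IsUniversalExt (K : A) {K₁ Y : A} (E : SES K₁ Y) (L : Submodule (End K) (Ext Y K 1)) :
    Prop :=
  InAdd K K₁ ∧ LinearMap.range (E.conn K) = L ∧ ModRightMinimal (E.conn K)

lemma InAdd.self (K : A) : InAdd K K := by
  refine ⟨1, biproduct.ι (fun _ : Fin 1 => K) (0 : Fin 1), biproduct.π (fun _ : Fin 1 => K) 0, ?_⟩
  simp

/-! ### Auxiliary lemmas for statement 9 -/

/-- If `𝟙 + t ≫ i` is invertible then so is `𝟙 + i ≫ t`. -/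
lemma isIso_one_add_swap {X K : A} (t : X ⟶ K) (i : K ⟶ X)
    (h : IsIso (𝟙 X + t ≫ i)) : IsIso (𝟙 K + i ≫ t) := by
  obtain ⟨u', hu1, hu2⟩ := h.1
  have h1 : t ≫ i ≫ u' = 𝟙 X - u' := by
    rw [eq_sub_iff_add_eq, add_comm]
    simpa [Preadditive.add_comp] using hu1
  have h2 : u' ≫ t ≫ i = 𝟙 X - u' := by
    rw [eq_sub_iff_add_eq, add_comm]
    simpa [Preadditive.comp_add] using hu2
  refine ⟨𝟙 K - i ≫ u' ≫ t, ?_, ?_⟩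
  · have e1 : (i ≫ t) ≫ (i ≫ u' ≫ t) = i ≫ t - i ≫ u' ≫ t := by
      have : (i ≫ t) ≫ (i ≫ u' ≫ t) = i ≫ (t ≫ i ≫ u') ≫ t := by
        simp only [Category.assoc]
      rw [this, h1, Preadditive.sub_comp, Preadditive.comp_sub, Category.id_comp]
    rw [Preadditive.add_comp, Preadditive.comp_sub, Preadditive.comp_sub,
      Category.id_comp, Category.comp_id, e1]
    simp only [Category.id_comp, Category.comp_id]
    abel
  · have e2 : (i ≫ u' ≫ t) ≫ (i ≫ t) = i ≫ t - i ≫ u' ≫ t := by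
      have : (i ≫ u' ≫ t) ≫ (i ≫ t) = i ≫ (u' ≫ t ≫ i) ≫ t := by
        simp only [Category.assoc]
      rw [this, h2, Preadditive.sub_comp, Preadditive.comp_sub, Category.id_comp]
    rw [Preadditive.sub_comp, Preadditive.comp_add, Preadditive.comp_add,
      Category.id_comp, Category.comp_id, e2]
    simp only [Category.id_comp, Category.comp_id]
    abel

/-- Every `End K'`-linear endomorphism of `Hom(K, K')` is precomposition with some
endomorphism of `K`, when `K ∈ add K'`. -/
lemma exists_rep {K K' : A} (h : InAdd K' K) (g : (K ⟶ K') →ₗ[End K'] (K ⟶ K')) :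
    ∃ w : K ⟶ K, ∀ u : K ⟶ K', g u = w ≫ u := by
  obtain ⟨n, s, r, hsr⟩ := h
  refine ⟨(∑ j : Fin n, g (s ≫ biproduct.π _ j) ≫ biproduct.ι (fun _ : Fin n => K') j) ≫ r, ?_⟩
  intro u
  have gsmul : ∀ (x : End K') (u : K ⟶ K'), g (u ≫ x) = g u ≫ x := by
    intro x u
    have := g.map_smul x u
    simpa only [End.smul_right] using this
  have hu : ∑ j : Fin n,
      (s ≫ biproduct.π (fun _ : Fin n => K') j) ≫
        (biproduct.ι (fun _ : Fin n => K') j ≫ r ≫ u) = u := by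
    have h0 : ∑ j : Fin n,
        (s ≫ biproduct.π (fun _ : Fin n => K') j) ≫
          (biproduct.ι (fun _ : Fin n => K') j ≫ r ≫ u) =
        s ≫ (∑ j : Fin n, biproduct.π (fun _ : Fin n => K') j ≫
          biproduct.ι (fun _ : Fin n => K') j) ≫ (r ≫ u) := by
      simp only [Preadditive.sum_comp, Preadditive.comp_sum, Category.assoc]
    rw [h0, biproduct.total, Category.id_comp, ← Category.assoc, hsr, Category.id_comp]
  conv_lhs => rw [← hu]
  rw [map_sum]
  rw [Finset.sum_congr rfl (fun j _ => gsmul _ _)]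
  simp only [Preadditive.sum_comp, Category.assoc]

/-- If precomposition with `w` is bijective on `Hom(K, K')` and `K ∈ add K'`,
then `w` is an isomorphism. -/
lemma isIso_of_precomp_bijective {K K' : A} (h : InAdd K' K) (w : K ⟶ K)
    (hw : Function.Bijective fun u : K ⟶ K' => w ≫ u) : IsIso w := by
  obtain ⟨n, s, r, hsr⟩ := h
  choose φ hφ using fun j : Fin n => hw.2 (s ≫ biproduct.π _ j)
  have hwf : w ≫ biproduct.lift φ = s := by
    ext j
    simp only [Category.assoc, biproduct.lift_π]
    exact hφ j
  set t : K ⟶ K := biproduct.lift φ ≫ r with htdef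
  have h1 : w ≫ t = 𝟙 K := by
    rw [htdef, ← Category.assoc, hwf, hsr]
  have h2 : t ≫ w = 𝟙 K := by
    have comp_eq : ∀ j : Fin n, t ≫ w ≫ s ≫ biproduct.π (fun _ : Fin n => K') j =
        s ≫ biproduct.π (fun _ : Fin n => K') j := by
      intro j
      apply hw.1
      show w ≫ _ = w ≫ _
      simp only [← Category.assoc]
      rw [h1, Category.id_comp]
    have hs : (t ≫ w) ≫ s = s := by
      ext j
      simpa [Category.assoc] using comp_eq j
    calc t ≫ w = (t ≫ w) ≫ 𝟙 K := by rw [Category.comp_id]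
      _ = (t ≫ w) ≫ s ≫ r := by rw [hsr]
      _ = ((t ≫ w) ≫ s) ≫ r := by rw [← Category.assoc]
      _ = s ≫ r := by rw [hs]
      _ = 𝟙 K := hsr
  exact ⟨t, h1, h2⟩

lemma SES.conn_apply {K Y : A} (E : SES K Y) {Z : A} (u : K ⟶ Z) :
    E.conn Z u = E.cls.comp (Ext.mk₀ u) (add_zero 1) := rfl

lemma SES.cls_comp_comp {K Y : A} (E : SES K Y) {M N : A} (a : K ⟶ M) (b : M ⟶ N) :
    E.cls.comp (Ext.mk₀ (a ≫ b)) (add_zero 1) =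
      (E.cls.comp (Ext.mk₀ a) (add_zero 1)).comp (Ext.mk₀ b) (add_zero 1) := by
  rw [Ext.comp_assoc_of_third_deg_zero, Ext.mk₀_comp_mk₀]

lemma SES.conn_i_comp {K Y : A} (E : SES K Y) {Z : A} (t : E.X ⟶ Z) :
    E.cls.comp (Ext.mk₀ (E.i ≫ t)) (add_zero 1) = 0 := by
  rw [E.cls_comp_comp]
  have hz : E.cls.comp (Ext.mk₀ E.i) (add_zero 1) = 0 := E.shortExact.extClass_comp
  rw [hz, Ext.zero_comp]

/-- Realization: if `mk₀ i ∘ x = mk₀ u` for some `x : Ext X Z 0`, then `u` factors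
through `i`, via the homology functor of the derived category. -/
lemma exists_lift_of_ext_zero {K₀ X Z : A} (i : K₀ ⟶ X) (u : K₀ ⟶ Z) (x : Ext X Z 0)
    (hx : (Ext.mk₀ i).comp x (zero_add 0) = Ext.mk₀ u) :
    ∃ t : X ⟶ Z, i ≫ t = u := by
  letI := HasDerivedCategory.standard A
  let H := DerivedCategory.homologyFunctor A 0
  let e₀ : DerivedCategory.singleFunctor A 0 ≅
      HomologicalComplex.single A (ComplexShape.up ℤ) 0 ⋙ DerivedCategory.Q :=
    ⟨(DerivedCategory.singleFunctorsPostcompQIso A).hom.hom 0,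
     (DerivedCategory.singleFunctorsPostcompQIso A).inv.hom 0,
     SingleFunctors.hom_inv_id_hom _ 0, SingleFunctors.inv_hom_id_hom _ 0⟩
  let ε : DerivedCategory.singleFunctor A 0 ⋙ H ≅ 𝟭 A :=
    Functor.isoWhiskerRight e₀ H ≪≫ Functor.associator _ _ _ ≪≫
      Functor.isoWhiskerLeft _ (DerivedCategory.homologyFunctorFactors A 0) ≪≫
      HomologicalComplex.homologyFunctorSingleIso A (ComplexShape.up ℤ) 0
  let φ : (DerivedCategory.singleFunctor A 0).obj X ⟶
      (DerivedCategory.singleFunctor A 0).obj Z :=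
    x.hom ≫ (shiftFunctorZero' (DerivedCategory A) ((0 : ℕ) : ℤ) (by simp)).hom.app _
  have hφ : (DerivedCategory.singleFunctor A 0).map i ≫ φ =
      (DerivedCategory.singleFunctor A 0).map u := by
    have h1 : (DerivedCategory.singleFunctor A 0).map i ≫ x.hom = (Ext.mk₀ u).hom := by
      rw [Ext.singleFunctor_map_comp_hom, hx]
    rw [Ext.mk₀_hom] at h1
    dsimp only [φ]
    rw [← Category.assoc, h1]
    dsimp only [ShiftedHom.mk₀]
    rw [Category.assoc, Iso.inv_hom_id_app]
    simp
  refine ⟨ε.inv.app X ≫ H.map φ ≫ ε.hom.app Z, ?_⟩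
  have n1 : i ≫ ε.inv.app X =
      ε.inv.app K₀ ≫ H.map ((DerivedCategory.singleFunctor A 0).map i) := by
    simpa using ε.inv.naturality i
  have n2 : H.map ((DerivedCategory.singleFunctor A 0).map u) ≫ ε.hom.app Z =
      ε.hom.app K₀ ≫ u := by
    simpa using ε.hom.naturality u
  calc i ≫ ε.inv.app X ≫ H.map φ ≫ ε.hom.app Z
      = (i ≫ ε.inv.app X) ≫ H.map φ ≫ ε.hom.app Z := by rw [← Category.assoc]
    _ = (ε.inv.app K₀ ≫ H.map ((DerivedCategory.singleFunctor A 0).map i)) ≫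
          H.map φ ≫ ε.hom.app Z := by rw [n1]
    _ = ε.inv.app K₀ ≫ (H.map ((DerivedCategory.singleFunctor A 0).map i) ≫ H.map φ) ≫
          ε.hom.app Z := by simp only [Category.assoc]
    _ = ε.inv.app K₀ ≫ H.map ((DerivedCategory.singleFunctor A 0).map i ≫ φ) ≫
          ε.hom.app Z := by rw [← H.map_comp]
    _ = ε.inv.app K₀ ≫ H.map ((DerivedCategory.singleFunctor A 0).map u) ≫
          ε.hom.app Z := by rw [hφ]
    _ = ε.inv.app K₀ ≫ ε.hom.app K₀ ≫ u := by rw [n2]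
    _ = (ε.inv.app K₀ ≫ ε.hom.app K₀) ≫ u := by rw [← Category.assoc]
    _ = u := by rw [Iso.inv_hom_id_app]; simp

/-- Exactness: if `ξ·u = 0` then `u` factors through `i`. -/
lemma SES.conn_exact {K Y : A} (E : SES K Y) {Z : A} (u : K ⟶ Z)
    (hu : E.cls.comp (Ext.mk₀ u) (add_zero 1) = 0) :
    ∃ t : E.X ⟶ Z, E.i ≫ t = u := by
  obtain ⟨x₂, hx₂⟩ := Ext.contravariant_sequence_exact₁ E.shortExact Z
    (Ext.mk₀ u) (by omega) hu
  exact exists_lift_of_ext_zero E.i u x₂ hx₂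

/-- Kernel property of a short exact sequence. -/
lemma SES.lift_exists {K Y : A} (E : SES K Y) {W : A} (k : W ⟶ E.X) (hk : k ≫ E.p = 0) :
    ∃ t : W ⟶ K, t ≫ E.i = k := by
  haveI : Mono (ShortComplex.mk E.i E.p E.zero).f := E.shortExact.mono_f
  exact ⟨E.shortExact.exact.lift k hk, E.shortExact.exact.lift_f k hk⟩

/-- for `K ∈ add K'`, `α` is right minimal iff the connecting map
`c(ξ, K') : Hom(K, K') → Ext¹(Y, K')` is right minimal as a `Γ(K')`-module morphism. -/
theorem stmt9 {K Y : A} (E : SES K Y) (K' : A) (h : InAdd K' K) :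
    RightMinimal E.p ↔ ModRightMinimal (E.conn K') := by
  constructor
  · intro hp g hg
    obtain ⟨w, hw⟩ := exists_rep h g
    have hδ : ∀ u : K ⟶ K',
        E.cls.comp (Ext.mk₀ ((w - 𝟙 K) ≫ u)) (add_zero 1) = 0 := by
      intro u
      have h1 : E.conn K' (w ≫ u) = E.conn K' u := by
        have := congrArg (fun c : (K ⟶ K') →ₗ[End K'] Ext Y K' 1 => c u) hg
        simp only [LinearMap.comp_apply] at this
        rwa [hw u] at this
      have h2 : E.conn K' ((w - 𝟙 K) ≫ u) = E.conn K' (w ≫ u) - E.conn K' u := by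
        rw [Preadditive.sub_comp, Category.id_comp, map_sub]
      rw [← SES.conn_apply, h2, h1, sub_self]
    obtain ⟨n, s, r, hsr⟩ := h
    choose τ hτ using fun j : Fin n =>
      E.conn_exact ((w - 𝟙 K) ≫ s ≫ biproduct.π (fun _ : Fin n => K') j) (hδ _)
    have ht : E.i ≫ biproduct.lift τ ≫ r = w - 𝟙 K := by
      have hlift : E.i ≫ biproduct.lift τ = (w - 𝟙 K) ≫ s := by
        ext j
        simpa [Category.assoc] using hτ j
      rw [← Category.assoc, hlift, Category.assoc, hsr, Category.comp_id]
    set t : E.X ⟶ K := biproduct.lift τ ≫ r with htdef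
    have hv : (𝟙 E.X + t ≫ E.i) ≫ E.p = E.p := by
      rw [Preadditive.add_comp, Category.id_comp, Category.assoc, E.zero,
        Limits.comp_zero, add_zero]
    have hviso : IsIso (𝟙 E.X + t ≫ E.i) := hp _ hv
    have hwiso : IsIso (𝟙 K + E.i ≫ t) := isIso_one_add_swap t E.i hviso
    have hweq : 𝟙 K + E.i ≫ t = w := by rw [ht]; abel
    rw [hweq] at hwiso
    have hbij : Function.Bijective fun u : K ⟶ K' => w ≫ u := by
      constructor
      · intro u u' huu
        have := congrArg (fun z => inv w ≫ z) huu
        simpa using this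
      · intro y
        exact ⟨inv w ≫ y, by simp⟩
    have hgw : ⇑g = fun u : K ⟶ K' => w ≫ u := funext hw
    rw [hgw]
    exact hbij
  · intro hc v hv
    obtain ⟨t, ht⟩ := E.lift_exists (v - 𝟙 E.X)
      (by rw [Preadditive.sub_comp, Category.id_comp, hv, sub_self])
    set w : K ⟶ K := 𝟙 K + E.i ≫ t with hwdef
    let g : (K ⟶ K') →ₗ[End K'] (K ⟶ K') :=
      { toFun := fun u => w ≫ u
        map_add' := fun u u' => by rw [Preadditive.comp_add]
        map_smul' := fun x u => by
          simp only [End.smul_right, RingHom.id_apply, ← Category.assoc] }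
    have hcg : (E.conn K').comp g = E.conn K' := by
      apply LinearMap.ext
      intro u
      simp only [LinearMap.comp_apply]
      show E.conn K' (w ≫ u) = E.conn K' u
      have hwu : w ≫ u = u + E.i ≫ t ≫ u := by
        rw [hwdef, Preadditive.add_comp, Category.id_comp, Category.assoc]
      rw [hwu, map_add]
      have h0 : E.conn K' (E.i ≫ t ≫ u) = 0 := by
        rw [SES.conn_apply]
        exact E.conn_i_comp (t ≫ u)
      rw [h0, add_zero]
    have hbij : Function.Bijective g := hc g hcg
    have hwiso : IsIso w := isIso_of_precomp_bijective h w hbij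
    have hveq : v = 𝟙 E.X + t ≫ E.i := by rw [ht]; abel
    rw [hveq]
    exact isIso_one_add_swap E.i t hwiso
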